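/- If integers ĥq, e, s₄, m₄, s₃, m₃ satisfy ĥq = 2·(s₄ + m₄·e) + e and 3·ĥq = 8·(s₃ + m₃·e) + 7·e with 1 ≤ ĥq ≤ 8, e ≥ 1, and s₄, m₄, s₃, m₃ ≥ 0, then (ĥq, e) = (5, 1) or (ĥq, e) = (7, 3). -/
import Mathlib

theorem stmt19 (q e s4 m4 s3 m3 : ℤ) (h1 : 1 ≤ q) (h2 : q ≤ 8) (h3 : 1 ≤ e)
    (hs4 : 0 ≤ s4) (hm4 : 0 ≤ m4) (hs3 : 0 ≤ s3) (hm3 : 0 ≤ m3)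
    (heq4 : q = 2 * (s4 + m4 * e) + e) (heq3 : 3 * q = 8 * (s3 + m3 * e) + 7 * e) :
    (q = 5 ∧ e = 1) ∨ (q = 7 ∧ e = 3) := by
  have h4 : 0 ≤ m4 * e := mul_nonneg hm4 (by linarith)
  have h5 : 0 ≤ m3 * e := mul_nonneg hm3 (by linarith)
  have he : e ≤ 3 := by nlinarith
  interval_cases e <;> omega
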